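/- (Maximum principle for the optimal target problem.) Assume hypothesis (EC). Let τ ∈ [0,T) and 0 ≤ M < M^τ. Then u* is an optimal control to (OP)^{M,τ} if and only if u* ∈ U_{M,τ} and Re ∫_τ^T ⟨B φ*(t), u*(t)⟩ dt = max_{v ∈ U_{M,τ}} Re ∫_τ^T ⟨B φ*(t), v(t)⟩ dt, where the adjoint state is φ*(t) = U(t−T)(z_d − y(T;χ_{(τ,T)}u*,y₀)). -/

import Mathlib

open MeasureTheory Set Filter Topology

noncomputable section

variable {H : Type*} [NormedAddCommGroup H] [InnerProductSpace ℂ H] [CompleteSpace H]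
  [SecondCountableTopology H]

/-- `U` is a strongly continuous one-parameter group of unitary operators on `H`,
abstracting the Schrödinger group `e^{-iΔt}`. -/
def IsUnitaryGroup (U : ℝ → H →L[ℂ] H) : Prop :=
  U 0 = ContinuousLinearMap.id ℂ H ∧
  (∀ s t : ℝ, U (s + t) = (U s).comp (U t)) ∧
  (∀ (t : ℝ) (x : H), ‖U t x‖ = ‖x‖) ∧
  ∀ x : H, Continuous fun t : ℝ => U t x

/-- `B` is a nonzero orthogonal projection on `H`, abstracting multiplication by `χ_ω`. -/
def IsOrthProj (B : H →L[ℂ] H) : Prop :=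
  B ≠ 0 ∧ B.comp B = B ∧ ∀ x y : H, (inner ℂ (B x) y : ℂ) = inner ℂ x (B y)

/-- Membership in `L∞((a,b);H)`. -/
def MemLinfty (u : ℝ → H) (a b : ℝ) : Prop :=
  AEStronglyMeasurable u (volume : Measure ℝ) ∧
    ∃ c : ℝ, ∀ᵐ t : ℝ ∂volume, t ∈ Ioo a b → ‖u t‖ ≤ c

/-- Membership in `L∞((0,∞);H)`. -/
def MemLinftyInf (u : ℝ → H) : Prop :=
  AEStronglyMeasurable u (volume : Measure ℝ) ∧
    ∃ c : ℝ, ∀ᵐ t : ℝ ∂volume, t ∈ Ioi (0 : ℝ) → ‖u t‖ ≤ c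

/-- The `L∞((a,b);H)` norm of `u`. -/
def supNorm (u : ℝ → H) (a b : ℝ) : ℝ :=
  sInf {c : ℝ | 0 ≤ c ∧ ∀ᵐ t : ℝ ∂volume, t ∈ Ioo a b → ‖u t‖ ≤ c}

/-- `stateT U B T τ u y₀ = y(T; χ_{(τ,T)}u, y₀)`, the mild solution at time `T` of the
controlled Schrödinger equation with initial state `y₀`, the control acting on `(τ,T)`:
`y(T) = U(T)y₀ + ∫_τ^T U(T-s) B u(s) ds`.  The free state at time `t` starting from `y₀`
with control `u` active from time `0` is `stateT U B t 0 u y₀`. -/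
def stateT (U : ℝ → H →L[ℂ] H) (B : H →L[ℂ] H) (T τ : ℝ) (u : ℝ → H) (y₀ : H) : H :=
  U T y₀ + ∫ s in Ioo τ T, U (T - s) (B (u s))

/-- Hypothesis (EC): `L∞`-exact controllability with cost. -/
def EC (U : ℝ → H →L[ℂ] H) (B : H →L[ℂ] H) : Prop :=
  ∀ τ : ℝ, 0 < τ → ∃ C : ℝ, 0 < C ∧ ∀ y₀ z : H, ∃ u : ℝ → H,
    AEStronglyMeasurable u (volume : Measure ℝ) ∧
    (∀ᵐ t : ℝ ∂volume, t ∈ Ioo 0 τ → ‖u t‖ ≤ C * ‖z - U τ y₀‖) ∧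
    stateT U B τ 0 u y₀ = z

/-- Hypothesis (UC): unique continuation. -/
def UC (U : ℝ → H →L[ℂ] H) (B : H →L[ℂ] H) : Prop :=
  ∀ η : H, η ≠ 0 → volume {t : ℝ | B (U t η) = 0} = 0

/-- The admissible set `U_M` of the minimal time problem `(TOCP)_M`. -/
def UMset (U : ℝ → H →L[ℂ] H) (B : H →L[ℂ] H) (y₀ : H) (M : ℝ) : Set (ℝ → H) :=
  {u | MemLinftyInf u ∧ (∀ᵐ t : ℝ ∂volume, t ∈ Ioi (0 : ℝ) → ‖u t‖ ≤ M) ∧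
    ∃ s : ℝ, 0 < s ∧ stateT U B s 0 u y₀ = 0}

/-- The minimal time `T_M` of `(TOCP)_M`. -/
def Tmin (U : ℝ → H →L[ℂ] H) (B : H →L[ℂ] H) (y₀ : H) (M : ℝ) : ℝ :=
  sInf {s : ℝ | 0 < s ∧ ∃ u ∈ UMset U B y₀ M, stateT U B s 0 u y₀ = 0}

/-- The admissible set `V_T` of the minimal norm problem `(NOCP)_T`. -/
def VTset (U : ℝ → H →L[ℂ] H) (B : H →L[ℂ] H) (y₀ : H) (T : ℝ) : Set (ℝ → H) :=
  {v | MemLinfty v 0 T ∧ stateT U B T 0 v y₀ = 0}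

/-- The minimal norm `M_T` of `(NOCP)_T`. -/
def Mmin (U : ℝ → H →L[ℂ] H) (B : H →L[ℂ] H) (y₀ : H) (T : ℝ) : ℝ :=
  sInf ((fun v : ℝ → H => supNorm v 0 T) '' VTset U B y₀ T)

/-- Hypothesis (BB): bang-bang property of the minimal time problems. -/
def BB (U : ℝ → H →L[ℂ] H) (B : H →L[ℂ] H) : Prop :=
  ∀ y₀ : H, y₀ ≠ 0 → ∀ M : ℝ, 0 < M → ∀ u ∈ UMset U B y₀ M,
    stateT U B (Tmin U B y₀ M) 0 u y₀ = 0 →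
    ∀ᵐ t : ℝ ∂volume, t ∈ Ioo 0 (Tmin U B y₀ M) → ‖u t‖ = M

/-- Hypothesis (ET): existence of optimal controls for the minimal time problems. -/
def ET (U : ℝ → H →L[ℂ] H) (B : H →L[ℂ] H) : Prop :=
  ∀ y₀ : H, y₀ ≠ 0 → ∀ M : ℝ, 0 < M →
    ∃ u ∈ UMset U B y₀ M, stateT U B (Tmin U B y₀ M) 0 u y₀ = 0

/-- The admissible set `U_{M,τ}`. -/
def UadmSet (M τ T : ℝ) : Set (ℝ → H) :=
  {u | MemLinfty u 0 T ∧ ∀ᵐ t : ℝ ∂volume, t ∈ Ioo τ T → ‖u t‖ ≤ M}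

/-- The optimal distance `r(M,τ)` of the optimal target problem `(OP)^{M,τ}`. -/
def rOP (U : ℝ → H →L[ℂ] H) (B : H →L[ℂ] H) (y₀ z_d : H) (T M τ : ℝ) : ℝ :=
  sInf ((fun u : ℝ → H => ‖stateT U B T τ u y₀ - z_d‖) '' UadmSet M τ T)

/-- `u` is an optimal control to `(OP)^{M,τ}`. -/
def IsOptOP (U : ℝ → H →L[ℂ] H) (B : H →L[ℂ] H) (y₀ z_d : H) (T M τ : ℝ) (u : ℝ → H) :
    Prop :=
  u ∈ UadmSet M τ T ∧ ‖stateT U B T τ u y₀ - z_d‖ = rOP U B y₀ z_d T M τ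

/-- `M^τ`, the minimal norm for exact steering to the target `z_d`. -/
def Mtau (U : ℝ → H →L[ℂ] H) (B : H →L[ℂ] H) (y₀ z_d : H) (T τ : ℝ) : ℝ :=
  sInf ((fun u : ℝ → H => supNorm u τ T) ''
    {u : ℝ → H | MemLinfty u 0 T ∧ stateT U B T τ u y₀ = z_d})

/-- The admissible set `W_{τ,r}` of the optimal norm problem `(NP)^{τ,r}`. -/
def WadmSet (U : ℝ → H →L[ℂ] H) (B : H →L[ℂ] H) (y₀ z_d : H) (T τ r : ℝ) :
    Set (ℝ → H) :=
  {u | MemLinfty u 0 T ∧ ‖stateT U B T τ u y₀ - z_d‖ ≤ r}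

/-- The optimal norm `M(τ,r)` of `(NP)^{τ,r}`. -/
def MNP (U : ℝ → H →L[ℂ] H) (B : H →L[ℂ] H) (y₀ z_d : H) (T τ r : ℝ) : ℝ :=
  sInf ((fun u : ℝ → H => supNorm u τ T) '' WadmSet U B y₀ z_d T τ r)

/-- `u` is an optimal control to `(NP)^{τ,r}`. -/
def IsOptNP (U : ℝ → H →L[ℂ] H) (B : H →L[ℂ] H) (y₀ z_d : H) (T τ r : ℝ) (u : ℝ → H) :
    Prop :=
  u ∈ WadmSet U B y₀ z_d T τ r ∧ supNorm u τ T = MNP U B y₀ z_d T τ r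

/-- The admissible set `V_{M,r}` of the second type optimal time problem `(TP)^{M,r}`. -/
def VadmSet (U : ℝ → H →L[ℂ] H) (B : H →L[ℂ] H) (y₀ z_d : H) (T M r : ℝ) :
    Set (ℝ → H) :=
  {u | ∃ τ : ℝ, τ ∈ Ico (0 : ℝ) T ∧ u ∈ UadmSet M τ T ∧
    ‖stateT U B T τ u y₀ - z_d‖ ≤ r}

/-- `τ_{M,r}(u)`. -/
def tauOf (U : ℝ → H →L[ℂ] H) (B : H →L[ℂ] H) (y₀ z_d : H) (T r : ℝ) (u : ℝ → H) : ℝ :=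
  sSup {τ : ℝ | τ ∈ Ico (0 : ℝ) T ∧ ‖stateT U B T τ u y₀ - z_d‖ ≤ r}

/-- The optimal time `τ(M,r)` of `(TP)^{M,r}`. -/
def tauTP (U : ℝ → H →L[ℂ] H) (B : H →L[ℂ] H) (y₀ z_d : H) (T M r : ℝ) : ℝ :=
  sSup (tauOf U B y₀ z_d T r '' VadmSet U B y₀ z_d T M r)

/-- `u` is an optimal control to `(TP)^{M,r}`. -/
def IsOptTP (U : ℝ → H →L[ℂ] H) (B : H →L[ℂ] H) (y₀ z_d : H) (T M r : ℝ) (u : ℝ → H) :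
    Prop :=
  u ∈ VadmSet U B y₀ z_d T M r ∧
    ‖stateT U B T (tauTP U B y₀ z_d T M r) u y₀ - z_d‖ ≤ r

/-- The adjoint state `φ*(t) = U(t-T)(z_d - y(T; χ_{(τ,T)}u, y₀))`. -/
def adjState (U : ℝ → H →L[ℂ] H) (B : H →L[ℂ] H) (y₀ z_d : H) (T τ : ℝ) (u : ℝ → H)
    (t : ℝ) : H :=
  U (t - T) (z_d - stateT U B T τ u y₀)

section AuxLemmas

variable {H : Type*} [NormedAddCommGroup H] [InnerProductSpace ℂ H] [CompleteSpace H]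
  [SecondCountableTopology H]

lemma IsUnitaryGroup.inner_map_map {U : ℝ → H →L[ℂ] H} (hU : IsUnitaryGroup U)
    (s : ℝ) (a b : H) : (inner ℂ (U s a) (U s b) : ℂ) = inner ℂ a b :=
  LinearIsometry.inner_map_map ⟨(U s).toLinearMap, hU.2.2.1 s⟩ a b

lemma IsUnitaryGroup.inner_shift {U : ℝ → H →L[ℂ] H} (hU : IsUnitaryGroup U)
    (s : ℝ) (a x : H) : (inner ℂ (U s a) x : ℂ) = inner ℂ a (U (-s) x) := by
  have hx : U s (U (-s) x) = x := by
    have h := hU.2.1 s (-s)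
    rw [add_neg_cancel, hU.1] at h
    calc U s (U (-s) x) = (U s).comp (U (-s)) x := rfl
      _ = x := by rw [← h]; rfl
  conv_lhs => rw [← hx]
  exact hU.inner_map_map s a _

lemma IsUnitaryGroup.joint_continuous {U : ℝ → H →L[ℂ] H} (hU : IsUnitaryGroup U) :
    Continuous fun p : ℝ × H => U p.1 p.2 := by
  rw [continuous_iff_continuousAt]
  rintro ⟨s₀, x₀⟩
  rw [ContinuousAt, tendsto_iff_norm_sub_tendsto_zero]
  apply squeeze_zero (g := fun p : ℝ × H => ‖p.2 - x₀‖ + ‖U p.1 x₀ - U s₀ x₀‖)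
    (fun p => norm_nonneg _)
  · intro p
    have h : U p.1 p.2 - U s₀ x₀ = U p.1 (p.2 - x₀) + (U p.1 x₀ - U s₀ x₀) := by
      rw [map_sub]; abel
    rw [h]
    refine (norm_add_le _ _).trans ?_
    rw [hU.2.2.1]
  · have hc : Continuous fun p : ℝ × H => ‖p.2 - x₀‖ + ‖U p.1 x₀ - U s₀ x₀‖ :=
      ((continuous_snd.sub continuous_const).norm).add
        ((((hU.2.2.2 x₀).comp continuous_fst).sub continuous_const).norm)
    have h := hc.tendsto (s₀, x₀)
    simpa using h

end AuxLemmas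

theorem op_maximum_principle
    (U : ℝ → H →L[ℂ] H) (B : H →L[ℂ] H) (hU : IsUnitaryGroup U) (hB : IsOrthProj B)
    (hEC : EC U B) (hECrev : EC (fun t => U (-t)) B)
    (T : ℝ) (hT : 0 < T) (y₀ z_d : H) (hrT : 0 < ‖U T y₀ - z_d‖)
    (τ M : ℝ) (hτ : τ ∈ Ico (0 : ℝ) T) (hM : 0 ≤ M) (hMlt : M < Mtau U B y₀ z_d T τ)
    (u : ℝ → H) :
    IsOptOP U B y₀ z_d T M τ u ↔
      u ∈ UadmSet M τ T ∧ ∀ v : ℝ → H, v ∈ UadmSet M τ T →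
        (∫ t in Ioo τ T, (inner ℂ (B (adjState U B y₀ z_d T τ u t)) (v t) : ℂ)).re ≤
          (∫ t in Ioo τ T, (inner ℂ (B (adjState U B y₀ z_d T τ u t)) (u t) : ℂ)).re := by
  classical
  -- measurability of the integrand
  have hmeas : ∀ w : ℝ → H, AEStronglyMeasurable w (volume : Measure ℝ) →
      AEStronglyMeasurable (fun s => U (T - s) (B (w s))) (volume : Measure ℝ) := by
    intro w hw
    exact hU.joint_continuous.comp_aestronglyMeasurable
      (((continuous_const.sub continuous_id).aestronglyMeasurable).prodMk
        (B.continuous.comp_aestronglyMeasurable hw))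
  -- integrability of the integrand for admissible controls
  have hIu : ∀ w ∈ UadmSet (H := H) M τ T,
      IntegrableOn (fun s => U (T - s) (B (w s))) (Ioo τ T) volume := by
    rintro w ⟨⟨hwa, -⟩, hwM⟩
    refine Integrable.mono' (g := fun _ => ‖B‖ * M)
      (integrableOn_const measure_Ioo_lt_top.ne) ((hmeas w hwa).restrict) ?_
    rw [ae_restrict_iff' measurableSet_Ioo]
    filter_upwards [hwM] with t ht hmem
    rw [hU.2.2.1]
    calc ‖B (w t)‖ ≤ ‖B‖ * ‖w t‖ := B.le_opNorm _
      _ ≤ ‖B‖ * M := mul_le_mul_of_nonneg_left (ht hmem) (norm_nonneg _)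
  -- the state minus the free evolution is the control integral
  have hSint : ∀ w : ℝ → H, stateT U B T τ w y₀ - U T y₀
      = ∫ s in Ioo τ T, U (T - s) (B (w s)) := by
    intro w; unfold stateT; rw [add_sub_cancel_left]
  -- the key duality identity
  have hkey : ∀ w ∈ UadmSet (H := H) M τ T,
      (∫ t in Ioo τ T, (inner ℂ (B (adjState U B y₀ z_d T τ u t)) (w t) : ℂ))
        = inner ℂ (z_d - stateT U B T τ u y₀) (stateT U B T τ w y₀ - U T y₀) := by
    intro w hw
    rw [hSint w, ← integral_inner (hIu w hw)]
    refine integral_congr_ae (ae_of_all _ fun t => ?_)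
    simp only [adjState]
    rw [hB.2.2, hU.inner_shift, neg_sub]
  -- linearity of the state map under convex combinations
  have hScomb : ∀ v ∈ UadmSet (H := H) M τ T, ∀ w ∈ UadmSet (H := H) M τ T, ∀ l : ℝ,
      stateT U B T τ (fun t => v t + (l : ℂ) • (w t - v t)) y₀
        = stateT U B T τ v y₀ + (l : ℂ) • (stateT U B T τ w y₀ - stateT U B T τ v y₀) := by
    intro v hv w hw l
    have hIv := hIu v hv
    have hIw := hIu w hw
    unfold stateT
    have hfun : (fun s => U (T - s) (B (v s + (l : ℂ) • (w s - v s)))) =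
        fun s => U (T - s) (B (v s)) + (l : ℂ) • (U (T - s) (B (w s)) - U (T - s) (B (v s))) := by
      funext s; simp only [map_add, map_sub, ContinuousLinearMap.map_smul]
    have h2 : Integrable (fun s => (l : ℂ) • ((U (T - s)) (B (w s)) - (U (T - s)) (B (v s))))
        (volume.restrict (Ioo τ T)) := (hIw.sub hIv).smul ((l : ℂ))
    rw [hfun, integral_add hIv h2, integral_smul, integral_sub hIw hIv]
    module
  -- convex combinations of admissible controls are admissible
  have hadm : ∀ v ∈ UadmSet (H := H) M τ T, ∀ w ∈ UadmSet (H := H) M τ T, ∀ l : ℝ,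
      0 ≤ l → l ≤ 1 → (fun t => v t + (l : ℂ) • (w t - v t)) ∈ UadmSet (H := H) M τ T := by
    rintro v ⟨⟨hva, cv, hvc⟩, hvM⟩ w ⟨⟨hwa, cw, hwc⟩, hwM⟩ l hl0 hl1
    have hsmulnorm : ∀ x : H, ‖(l : ℂ) • x‖ = l * ‖x‖ := by
      intro x
      rw [norm_smul, Complex.norm_real, Real.norm_eq_abs, abs_of_nonneg hl0]
    refine ⟨⟨hva.add ((hwa.sub hva).const_smul ((l : ℂ))), |cv| + (|cw| + |cv|), ?_⟩, ?_⟩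
    · filter_upwards [hvc, hwc] with t h1 h2 hmem
      have h3 : ‖w t - v t‖ ≤ ‖w t‖ + ‖v t‖ := norm_sub_le _ _
      have h4 : ‖v t + (l : ℂ) • (w t - v t)‖ ≤ ‖v t‖ + l * ‖w t - v t‖ := by
        refine (norm_add_le _ _).trans ?_
        rw [hsmulnorm]
      have h5 := h1 hmem; have h6 := h2 hmem
      have h7 : ‖v t‖ ≤ |cv| := h5.trans (le_abs_self _)
      have h8 : ‖w t‖ ≤ |cw| := h6.trans (le_abs_self _)
      nlinarith [norm_nonneg (v t), norm_nonneg (w t), norm_nonneg (w t - v t)]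
    · filter_upwards [hvM, hwM] with t h1 h2 hmem
      have hco : v t + (l : ℂ) • (w t - v t) = ((1 - l : ℝ) : ℂ) • v t + (l : ℂ) • w t := by
        push_cast; module
      rw [hco]
      have h4 : ‖((1 - l : ℝ) : ℂ) • v t‖ = (1 - l) * ‖v t‖ := by
        rw [norm_smul, Complex.norm_real, Real.norm_eq_abs, abs_of_nonneg (by linarith)]
      refine (norm_add_le _ _).trans ?_
      rw [h4, hsmulnorm]
      nlinarith [h1 hmem, h2 hmem, norm_nonneg (v t), norm_nonneg (w t)]
  -- the image set of the optimization problem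
  have hbdd : BddBelow ((fun w : ℝ → H => ‖stateT U B T τ w y₀ - z_d‖) ''
      UadmSet (H := H) M τ T) := by
    refine ⟨0, ?_⟩
    rintro x ⟨w, -, rfl⟩
    exact norm_nonneg _
  -- real-part subtraction identity
  have hsub : ∀ a b : H, (inner ℂ (z_d - stateT U B T τ u y₀) a : ℂ).re
      - (inner ℂ (z_d - stateT U B T τ u y₀) b : ℂ).re
      = (inner ℂ (z_d - stateT U B T τ u y₀) (a - b) : ℂ).re := by
    intro a b
    rw [inner_sub_right]
    simp [Complex.sub_re, inner_sub_left]
  constructor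
  · rintro ⟨huadm, hopt⟩
    refine ⟨huadm, fun v hv => ?_⟩
    rw [hkey v hv, hkey u huadm]
    have hdiff : (stateT U B T τ v y₀ - U T y₀) - (stateT U B T τ u y₀ - U T y₀)
        = stateT U B T τ v y₀ - stateT U B T τ u y₀ := by abel
    have hmain : (inner ℂ (z_d - stateT U B T τ u y₀)
        (stateT U B T τ v y₀ - stateT U B T τ u y₀) : ℂ).re ≤ 0 := by
      by_contra hpos
      push_neg at hpos
      set d : H := stateT U B T τ v y₀ - stateT U B T τ u y₀ with hd
      set a : ℝ := (inner ℂ (z_d - stateT U B T τ u y₀) d : ℂ).re with ha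
      have hd1 : (0 : ℝ) < ‖d‖ ^ 2 + 1 := by positivity
      set l : ℝ := min 1 (a / (‖d‖ ^ 2 + 1)) with hl
      have hl0 : 0 < l := lt_min one_pos (div_pos hpos hd1)
      have hl1 : l ≤ 1 := min_le_left _ _
      have hla : l * (‖d‖ ^ 2 + 1) ≤ a := (le_div_iff₀ hd1).mp (min_le_right _ _)
      -- the perturbed control
      have hmem := hadm u huadm v hv l hl0.le hl1
      have hle : ‖stateT U B T τ u y₀ - z_d‖
          ≤ ‖(stateT U B T τ u y₀ - z_d) + (l : ℂ) • d‖ := by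
        have h1 : rOP U B y₀ z_d T M τ
            ≤ ‖stateT U B T τ (fun t => u t + (l : ℂ) • (v t - u t)) y₀ - z_d‖ :=
          csInf_le hbdd ⟨_, hmem, rfl⟩
        rw [← hopt, hScomb u huadm v hv l] at h1
        rw [add_sub_right_comm] at h1
        exact h1
      have hsq := pow_le_pow_left₀ (norm_nonneg _) hle 2
      have hexp : ‖(stateT U B T τ u y₀ - z_d) + (l : ℂ) • d‖ ^ 2
          = ‖stateT U B T τ u y₀ - z_d‖ ^ 2
            + 2 * (l * (inner ℂ (stateT U B T τ u y₀ - z_d) d : ℂ).re) + l ^ 2 * ‖d‖ ^ 2 := by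
        rw [@norm_add_sq ℂ, inner_smul_right, norm_smul]
        simp [Complex.norm_real, Real.norm_eq_abs, abs_of_nonneg hl0.le, mul_pow,
          RCLike.re_to_complex, Complex.re_ofReal_mul, sq_abs, inner_sub_left]
      have hre : (inner ℂ (stateT U B T τ u y₀ - z_d) d : ℂ).re = -a := by
        have : stateT U B T τ u y₀ - z_d = -(z_d - stateT U B T τ u y₀) := by abel
        rw [this, inner_neg_left]
        simp only [Complex.neg_re, ha]
      rw [hexp, hre] at hsq
      nlinarith [mul_le_mul_of_nonneg_left hla hl0.le, mul_pos hl0 hpos, sq_nonneg l]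
    have h9 := hsub (stateT U B T τ v y₀ - U T y₀) (stateT U B T τ u y₀ - U T y₀)
    rw [hdiff] at h9
    linarith
  · rintro ⟨huadm, hmax⟩
    refine ⟨huadm, ?_⟩
    apply le_antisymm
    · refine le_csInf ⟨_, ⟨u, huadm, rfl⟩⟩ ?_
      rintro b ⟨v, hv, rfl⟩
      have hineq := hmax v hv
      rw [hkey v hv, hkey u huadm] at hineq
      have hdiff : (stateT U B T τ v y₀ - U T y₀) - (stateT U B T τ u y₀ - U T y₀)
          = stateT U B T τ v y₀ - stateT U B T τ u y₀ := by abel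
      have hmain : (inner ℂ (z_d - stateT U B T τ u y₀)
          (stateT U B T τ v y₀ - stateT U B T τ u y₀) : ℂ).re ≤ 0 := by
        rw [← hdiff, ← hsub]
        linarith
      have hre : (inner ℂ (stateT U B T τ u y₀ - z_d)
          (stateT U B T τ v y₀ - stateT U B T τ u y₀) : ℂ).re ≥ 0 := by
        have h : stateT U B T τ u y₀ - z_d = -(z_d - stateT U B T τ u y₀) := by abel
        rw [h, inner_neg_left]
        simp only [Complex.neg_re]
        linarith
      have hdecomp : stateT U B T τ v y₀ - z_d = (stateT U B T τ u y₀ - z_d)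
          + (stateT U B T τ v y₀ - stateT U B T τ u y₀) := by abel
      have hsq : ‖stateT U B T τ u y₀ - z_d‖ ^ 2 ≤ ‖stateT U B T τ v y₀ - z_d‖ ^ 2 := by
        rw [hdecomp, @norm_add_sq ℂ]
        simp only [RCLike.re_to_complex]
        nlinarith [sq_nonneg ‖stateT U B T τ v y₀ - stateT U B T τ u y₀‖]
      have := Real.sqrt_le_sqrt hsq
      rwa [Real.sqrt_sq (norm_nonneg _), Real.sqrt_sq (norm_nonneg _)] at this
    · exact csInf_le hbdd ⟨u, huadm, rfl⟩
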